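/- Let (X,ρ) be a metric space, let P be an abstract porosity on X, and let A ⊆ X be a set that is not σ-P-porous. Then the kernel K_P(A) (the set of all x ∈ A at which A is not σ-P-porous) is nonempty and closed in A (i.e., closed in the subspace topology of A). -/

import Mathlib

open Metric Filter Set

/-- An abstract porosity on a metric space `X`: a relation between points and subsets
of `X` satisfying the axioms (A1), (A2), (A3). -/
structure AbstractPorosity (X : Type*) [MetricSpace X] where
  rel : X → Set X → Prop
  mono : ∀ (x : X) (A B : Set X), A ⊆ B → rel x B → rel x A
  loc : ∀ (x : X) (A : Set X), rel x A ↔ ∃ r > 0, rel x (A ∩ Metric.ball x r)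
  clos : ∀ (x : X) (A : Set X), rel x A ↔ rel x (closure A)

variable {X : Type*} [MetricSpace X]

/-- `A` is `P`-porous if `P(x,A)` holds at each point `x ∈ A`. -/
def AbstractPorosity.Porous (P : AbstractPorosity X) (A : Set X) : Prop :=
  ∀ x ∈ A, P.rel x A

/-- `A` is σ-`P`-porous if it is a countable union of `P`-porous sets. -/
def AbstractPorosity.SigmaPorous (P : AbstractPorosity X) (A : Set X) : Prop :=
  ∃ f : ℕ → Set X, (∀ n, P.Porous (f n)) ∧ A = ⋃ n, f n

/-- `A` is σ-`P`-porous at `x` if some `A ∩ B(x,r)` (r>0) is σ-`P`-porous. -/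
def AbstractPorosity.SigmaPorousAt (P : AbstractPorosity X) (A : Set X) (x : X) : Prop :=
  ∃ r > 0, P.SigmaPorous (A ∩ Metric.ball x r)

/-- The kernel `K_P(A)`: points of `A` at which `A` is not σ-`P`-porous. -/
def AbstractPorosity.kernel (P : AbstractPorosity X) (A : Set X) : Set X :=
  {x ∈ A | ¬ P.SigmaPorousAt A x}

/-- A subset of a σ-`P`-porous set is σ-`P`-porous. -/
lemma AbstractPorosity.SigmaPorous.subset {P : AbstractPorosity X} {A B : Set X}
    (h : P.SigmaPorous A) (hBA : B ⊆ A) : P.SigmaPorous B := by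
  obtain ⟨f, hf, rfl⟩ := h
  refine ⟨fun n => f n ∩ B, fun n x hx => P.mono x _ (f n) inter_subset_left (hf n x hx.1), ?_⟩
  rw [← Set.iUnion_inter, Set.inter_eq_right.mpr hBA]

/-- The Stone-type σ-discrete decomposition associated to a cover of `A` by the balls
`B(α, r α)`, where `ι x` is meant to be the least `α` (in some well-order) with
`x ∈ B(α, r α)`. -/
def stoneD (A : Set X) (ι : X → X) (r : X → ℝ) : ℕ → X → Set X := fun n α =>
  {y | ∃ x, x ∈ A ∧ ι x = α ∧ (∀ j, j < n → ∀ β, x ∉ stoneD A ι r j β) ∧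
    Metric.ball x (3 * (1/2 : ℝ)^n) ⊆ Metric.ball α (r α) ∧ y ∈ Metric.ball x ((1/2 : ℝ)^n)}
  termination_by n => n

lemma stoneD_def (A : Set X) (ι : X → X) (r : X → ℝ) (n : ℕ) (α : X) :
    stoneD A ι r n α =
    {y | ∃ x, x ∈ A ∧ ι x = α ∧ (∀ j, j < n → ∀ β, x ∉ stoneD A ι r j β) ∧
      Metric.ball x (3 * (1/2 : ℝ)^n) ⊆ Metric.ball α (r α) ∧ y ∈ Metric.ball x ((1/2 : ℝ)^n)} := by
  rw [stoneD]

/-- A set which is σ-`P`-porous at each of its points is σ-`P`-porous. -/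
lemma AbstractPorosity.sigmaPorous_of_locally (P : AbstractPorosity X) (A : Set X)
    (h : ∀ x ∈ A, P.SigmaPorousAt A x) : P.SigmaPorous A := by
  classical
  choose! r hr hσ using h
  set lt := @WellOrderingRel X with hlt
  have wf : WellFounded lt := (WellOrderingRel.isWellOrder).toIsWellFounded.wf
  set S : X → Set X := fun x => {α | α ∈ A ∧ x ∈ Metric.ball α (r α)} with hS
  have hSsub : ∀ x, S x ⊆ A := fun x α hα => hα.1
  have hSx : ∀ x ∈ A, x ∈ S x := fun x hx => ⟨hx, Metric.mem_ball_self (hr x hx)⟩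
  set ι : X → X := fun x => if h : (S x).Nonempty then wf.min (S x) h else x with hι
  have hι1 : ∀ x ∈ A, ι x ∈ S x := by
    intro x hx
    have hne : (S x).Nonempty := ⟨x, hSx x hx⟩
    simp only [hι, dif_pos hne]
    exact wf.min_mem _ hne
  have hι2 : ∀ x ∈ A, ∀ β ∈ S x, ¬ lt β (ι x) := by
    intro x hx β hβ
    have hne : (S x).Nonempty := ⟨x, hSx x hx⟩
    simp only [hι, dif_pos hne]
    exact wf.not_lt_min _ hβ
  set D : ℕ → X → Set X := stoneD A ι r with hD
  have cpos : ∀ n : ℕ, (0:ℝ) < (1/2)^n := fun n => by positivity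
  -- each element of D n α lies in a small ball around a generator
  have hgen : ∀ n α y, y ∈ D n α → ∃ x, x ∈ A ∧ ι x = α ∧
      Metric.ball x (3 * (1/2 : ℝ)^n) ⊆ Metric.ball α (r α) ∧ y ∈ Metric.ball x ((1/2 : ℝ)^n) := by
    intro n α y hy
    rw [hD, stoneD_def] at hy
    obtain ⟨x, h1, h2, _, h4, h5⟩ := hy
    exact ⟨x, h1, h2, h4, h5⟩
  -- D n α ⊆ ball α (r α)
  have hDsub : ∀ n α, D n α ⊆ Metric.ball α (r α) := by
    intro n α y hy
    obtain ⟨x, _, _, h4, h5⟩ := hgen n α y hy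
    apply h4
    refine Metric.mem_ball.mpr (lt_of_lt_of_le (Metric.mem_ball.mp h5) ?_)
    nlinarith [cpos n]
  -- separation between distinct pieces at level n
  have hsep : ∀ n (α β : X), α ≠ β → ∀ y ∈ D n α, ∀ z ∈ D n β, (1/2 : ℝ)^n ≤ dist y z := by
    intro n α β hne y hy z hz
    obtain ⟨x, hx1, hx2, hx4, hx5⟩ := hgen n α y hy
    obtain ⟨x', hx'1, hx'2, hx'4, hx'5⟩ := hgen n β z hz
    have hαA : α ∈ A := hx2 ▸ hSsub x (hι1 x hx1)
    have hβA : β ∈ A := hx'2 ▸ hSsub x' (hι1 x' hx'1)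
    have key : 3 * (1/2 : ℝ)^n ≤ dist x x' := by
      rcases trichotomous_of lt α β with hlt1 | heq | hlt2
      · -- α before β : x' ∉ ball α (r α)
        have hx'notin : x' ∉ Metric.ball α (r α) := by
          intro hmem
          exact hι2 x' hx'1 α ⟨hαA, hmem⟩ (hx'2 ▸ hlt1)
        have hnb : x' ∉ Metric.ball x (3 * (1/2 : ℝ)^n) := fun hc => hx'notin (hx4 hc)
        have hge : 3 * (1/2 : ℝ)^n ≤ dist x' x :=
          le_of_not_gt fun hl => hnb (Metric.mem_ball.mpr hl)
        rwa [dist_comm] at hge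
      · exact absurd heq hne
      · -- β before α : x ∉ ball β (r β)
        have hxnotin : x ∉ Metric.ball β (r β) := by
          intro hmem
          exact hι2 x hx1 β ⟨hβA, hmem⟩ (hx2 ▸ hlt2)
        have hnb : x ∉ Metric.ball x' (3 * (1/2 : ℝ)^n) := fun hc => hxnotin (hx'4 hc)
        exact le_of_not_gt fun hl => hnb (Metric.mem_ball.mpr hl)
    have t1 : dist y x < (1/2 : ℝ)^n := Metric.mem_ball.mp hx5
    have t2 : dist z x' < (1/2 : ℝ)^n := Metric.mem_ball.mp hx'5
    have tri : dist x x' ≤ dist x y + dist y z + dist z x' := dist_triangle4 x y z x'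
    rw [dist_comm x y] at tri
    linarith
  -- the pieces cover A
  have hcov : ∀ x ∈ A, ∃ n α, x ∈ D n α := by
    intro x hx
    by_contra hcon
    push_neg at hcon
    set α := ι x with hα
    have hαS : α ∈ S x := hι1 x hx
    have hd : dist x α < r α := Metric.mem_ball.mp hαS.2
    obtain ⟨n, hn⟩ : ∃ n : ℕ, 3 * (1/2 : ℝ)^n < r α - dist x α := by
      obtain ⟨n, hn⟩ := exists_pow_lt_of_lt_one (by linarith : (0:ℝ) < (r α - dist x α)/3)
        (by norm_num : (1/2 : ℝ) < 1)
      exact ⟨n, by linarith⟩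
    have hball : Metric.ball x (3 * (1/2 : ℝ)^n) ⊆ Metric.ball α (r α) := by
      refine Metric.ball_subset_ball' ?_
      linarith
    have : x ∈ D n α := by
      rw [hD, stoneD_def]
      exact ⟨x, hx, rfl, fun j hj β => hcon j β, hball, Metric.mem_ball_self (cpos n)⟩
    exact hcon n α this
  -- each A ∩ D n α is σ-porous
  have hADσ : ∀ n α, P.SigmaPorous (A ∩ D n α) := by
    intro n α
    rcases Set.eq_empty_or_nonempty (A ∩ D n α) with he | ⟨y, hyA, hyD⟩
    · exact ⟨fun _ => ∅, fun n x hx => absurd hx (Set.notMem_empty x),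
        by rw [he]; simp⟩
    · obtain ⟨x, hx1, hx2, _, _⟩ := hgen n α y hyD
      have hαA : α ∈ A := hx2 ▸ hSsub x (hι1 x hx1)
      exact (hσ α hαA).subset (Set.inter_subset_inter_right A (hDsub n α))
  choose F hF1 hF2 using fun n α => hADσ n α
  set g : ℕ → ℕ → Set X := fun n m => ⋃ α, F n α m with hg
  have hFsub : ∀ n α m, F n α m ⊆ A ∩ D n α := by
    intro n α m
    rw [hF2 n α]
    exact Set.subset_iUnion _ m
  have hgPor : ∀ n m, P.Porous (g n m) := by
    intro n m x hx
    obtain ⟨α, hα⟩ := Set.mem_iUnion.mp hx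
    have hxD : x ∈ D n α := (hFsub n α m hα).2
    have hsub : g n m ∩ Metric.ball x ((1/2 : ℝ)^n) ⊆ F n α m := by
      rintro z ⟨hz1, hz2⟩
      obtain ⟨β, hβ⟩ := Set.mem_iUnion.mp hz1
      rcases eq_or_ne β α with rfl | hne
      · exact hβ
      · exfalso
        have := hsep n α β (Ne.symm hne) x hxD z (hFsub n β m hβ).2
        have := Metric.mem_ball.mp hz2
        rw [dist_comm] at this
        linarith
    have hrel : P.rel x (F n α m) := hF1 n α m x hα
    exact (P.loc x (g n m)).mpr ⟨(1/2 : ℝ)^n, cpos n, P.mono x _ _ hsub hrel⟩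
  have hgUnion : A = ⋃ n, ⋃ m, g n m := by
    apply Set.Subset.antisymm
    · intro x hx
      obtain ⟨n, α, hnα⟩ := hcov x hx
      have : x ∈ A ∩ D n α := ⟨hx, hnα⟩
      rw [hF2 n α] at this
      obtain ⟨m, hm⟩ := Set.mem_iUnion.mp this
      exact Set.mem_iUnion.mpr ⟨n, Set.mem_iUnion.mpr ⟨m, Set.mem_iUnion.mpr ⟨α, hm⟩⟩⟩
    · intro x hx
      obtain ⟨n, hn⟩ := Set.mem_iUnion.mp hx
      obtain ⟨m, hm⟩ := Set.mem_iUnion.mp hn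
      obtain ⟨α, hα⟩ := Set.mem_iUnion.mp hm
      exact (hFsub n α m hα).1
  refine ⟨fun k => g (Nat.unpair k).1 (Nat.unpair k).2,
    fun k => hgPor _ _, ?_⟩
  rw [hgUnion]
  apply Set.Subset.antisymm
  · intro x hx
    obtain ⟨n, hn⟩ := Set.mem_iUnion.mp hx
    obtain ⟨m, hm⟩ := Set.mem_iUnion.mp hn
    exact Set.mem_iUnion.mpr ⟨Nat.pair n m, by simpa [Nat.unpair_pair] using hm⟩
  · intro x hx
    obtain ⟨k, hk⟩ := Set.mem_iUnion.mp hx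
    exact Set.mem_iUnion.mpr ⟨(Nat.unpair k).1, Set.mem_iUnion.mpr ⟨(Nat.unpair k).2, hk⟩⟩

/-- If `A` is not σ-`P`-porous, its kernel `K_P(A)` is nonempty and closed in `A`. -/
theorem kernel_nonempty_and_closed_in {X : Type*} [MetricSpace X]
    (P : AbstractPorosity X) (A : Set X) (hA : ¬ P.SigmaPorous A) :
    (P.kernel A).Nonempty ∧ closure (P.kernel A) ∩ A = P.kernel A := by
  constructor
  · by_contra hne
    rw [Set.not_nonempty_iff_eq_empty] at hne
    apply hA
    apply P.sigmaPorous_of_locally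
    intro x hx
    by_contra hcon
    have : x ∈ P.kernel A := ⟨hx, hcon⟩
    rw [hne] at this
    exact this
  · apply Set.Subset.antisymm
    · rintro x ⟨hxc, hxA⟩
      refine ⟨hxA, ?_⟩
      rintro ⟨r, hrpos, hσ⟩
      obtain ⟨y, hyK, hdy⟩ := Metric.mem_closure_iff.mp hxc (r/2) (by linarith)
      refine hyK.2 ⟨r/2, by linarith, hσ.subset ?_⟩
      rintro z ⟨hzA, hzB⟩
      refine ⟨hzA, Metric.mem_ball.mpr ?_⟩
      have h1 : dist z y < r/2 := Metric.mem_ball.mp hzB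
      have h2 : dist y x < r/2 := by rw [dist_comm] at hdy; exact hdy
      calc dist z x ≤ dist z y + dist y x := dist_triangle z y x
        _ < r := by linarith
    · intro x hx
      exact ⟨subset_closure hx, hx.1⟩
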